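/- arXiv:2203.05301 — 5 statements merged into one kernel-verified Lean document; each statement's English description precedes it below -/
import Mathlib

section
/- Assume 0 < δ < 1 − 1/q. Let C ⊆ F^n be a balanced code and set k = log_q|C|. Then the number of codewords of C of Hamming weight at most δn satisfies |{c ∈ C : w(c) ≤ δn}| ≤ q^{k·h_q(δ)}. -/
/-- A code `C ⊆ F^n` is *balanced* if there exist subsets `I₁, …, I_m` of the index set
(repetitions allowed) and a positive integer `t` such that (1) for each `j` the projection
onto the coordinates in `I_j` maps `C` bijectively onto `F^{I_j}`, and (2) every index `i`
lies in exactly `t` of the sets `I₁, …, I_m`. -/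
def IsBalancedCode {F : Type*} {n : ℕ} (C : Set (Fin n → F)) : Prop :=
  ∃ (m : ℕ) (Is : Fin m → Finset (Fin n)) (t : ℕ), 0 < t ∧
    (∀ j, Set.BijOn (fun a : Fin n → F => fun i : {x : Fin n // x ∈ Is j} => a i.1)
      C Set.univ) ∧
    (∀ i : Fin n, (Finset.univ.filter fun j => i ∈ Is j).card = t)

/-- The `q`-ary entropy function `h_q`. -/
noncomputable def entropy (q : ℕ) (x : ℝ) : ℝ :=
  x * Real.logb q (q - 1) - x * Real.logb q x - (1 - x) * Real.logb q (1 - x)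

open Finset Real

lemma doubleCount {n m t : ℕ} (Is : Fin m → Finset (Fin n))
    (hcount : ∀ i : Fin n, (Finset.univ.filter fun j => i ∈ Is j).card = t)
    (P : Fin n → Prop) [DecidablePred P] :
    ∑ j, ((Is j).filter P).card = t * (Finset.univ.filter P).card := by
  have h1 : ∀ j, ((Is j).filter P).card
      = ∑ i : Fin n, if i ∈ Is j ∧ P i then 1 else 0 := by
    intro j
    rw [show (Is j).filter P = Finset.univ.filter (fun i => i ∈ Is j ∧ P i) by
      ext i; simp]
    exact Finset.card_filter _ _
  simp_rw [h1]
  rw [Finset.sum_comm]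
  have h2 : ∀ i : Fin n, (∑ j, if i ∈ Is j ∧ P i then 1 else 0)
      = if P i then t else 0 := by
    intro i
    by_cases hP : P i
    · simp only [hP, and_true, if_true]
      rw [← Finset.card_filter, hcount i]
    · simp [hP]
  rw [Finset.sum_congr rfl fun i _ => h2 i, Finset.sum_ite, Finset.sum_const,
    Finset.sum_const_zero, add_zero, smul_eq_mul, mul_comm]


lemma lemA {σ F : Type*} [Fintype σ] [DecidableEq σ] [Fintype F] [DecidableEq F] [Zero F]
    (μ : ℝ) :
    ∑ x : σ → F, μ ^ hammingNorm x
      = (1 + (Fintype.card F - 1 : ℝ) * μ) ^ Fintype.card σ := by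
  have h1 : ∀ x : σ → F, μ ^ hammingNorm x = ∏ i, (if x i ≠ 0 then μ else 1) := by
    intro x
    rw [hammingNorm, Finset.prod_ite, Finset.prod_const, Finset.prod_const, one_pow, mul_one]
  simp_rw [h1]
  have key := Fintype.prod_sum (ι := σ) (κ := fun _ => F)
    (f := fun _ (a : F) => if a ≠ 0 then μ else 1)
  rw [← key]
  have h2 : ∀ _i : σ, (∑ a : F, if a ≠ 0 then μ else 1) = 1 + (Fintype.card F - 1 : ℝ) * μ := by
    intro _
    rw [Finset.sum_ite, Finset.sum_const, Finset.sum_const]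
    have hc : ({a : F | ¬ a ≠ 0} : Finset F).card = 1 := by
      simp [Finset.filter_eq']
    have hc2 : ({a : F | a ≠ 0} : Finset F).card = Fintype.card F - 1 := by
      have := Finset.card_filter_add_card_filter_not (s := (univ : Finset F))
        (p := fun a => a ≠ 0)
      rw [Finset.card_univ] at this
      omega
    rw [hc, hc2, one_smul, nsmul_eq_mul]
    have hF : 1 ≤ Fintype.card F := Fintype.card_pos
    push_cast [hF]
    ring
  rw [Finset.prod_congr rfl (fun i _ => h2 i), Finset.prod_const, Finset.card_univ]


/-- Assume `0 < δ < 1 − 1/q`. Let `C ⊆ F^n` be a balanced code and set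
`k = log_q |C|`. Then the number of codewords of `C` of Hamming weight at most `δn` satisfies
`|{c ∈ C : w(c) ≤ δn}| ≤ q^{k·h_q(δ)}`. -/
theorem stmt6 {F : Type*} [Field F] [Fintype F] [DecidableEq F] {n : ℕ}
    (q : ℕ) (hqcard : q = Fintype.card F)
    (δ : ℝ) (hδ0 : 0 < δ) (hδ1 : δ < 1 - 1 / (q : ℝ))
    (C : Set (Fin n → F)) (hbal : IsBalancedCode C)
    (k : ℝ) (hk : k = Real.logb q (Nat.card C)) :
    (Nat.card {c : Fin n → F // c ∈ C ∧ (hammingNorm c : ℝ) ≤ δ * n} : ℝ)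
      ≤ (q : ℝ) ^ (k * entropy q δ) := by
  classical
  obtain ⟨m, Is, t, ht, hbij, hcount⟩ := hbal
  have hq2 : 2 ≤ q := hqcard ▸ Fintype.one_lt_card
  -- degenerate case m = 0
  rcases Nat.eq_zero_or_pos m with hm | hm
  · -- then n = 0
    have hn : n = 0 := by
      by_contra hn
      have := hcount ⟨0, Nat.pos_of_ne_zero hn⟩
      subst hm
      simp at this
      omega
    subst hn
    have hcard1 : Nat.card {c : Fin 0 → F // c ∈ C ∧ (hammingNorm c : ℝ) ≤ δ * 0} ≤ 1 := by
      have : Nat.card (Fin 0 → F) = 1 := Nat.card_unique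
      calc Nat.card {c : Fin 0 → F // c ∈ C ∧ (hammingNorm c : ℝ) ≤ δ * 0}
          ≤ Nat.card (Fin 0 → F) := Nat.card_le_card_of_injective _ Subtype.val_injective
        _ = 1 := this
    have hC1 : Nat.card C ≤ 1 := by
      have : Nat.card (Fin 0 → F) = 1 := Nat.card_unique
      calc Nat.card C ≤ Nat.card (Fin 0 → F) :=
          Nat.card_le_card_of_injective _ Subtype.val_injective
        _ = 1 := this
    have hk0 : k = 0 := by
      interval_cases h : Nat.card C <;> simp [hk, h]
    rw [hk0, zero_mul, Real.rpow_zero]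
    exact_mod_cast hcard1
  -- main case : m > 0
  set j₀ : Fin m := ⟨0, hm⟩
  set k₀ : ℕ := (Is j₀).card with hk₀def
  set CF : Finset (Fin n → F) := Finset.univ.filter (· ∈ C) with hCFdef
  have hmemCF : ∀ c, c ∈ CF ↔ c ∈ C := by intro c; simp [hCFdef]
  have hNcard : Nat.card C = CF.card := by
    rw [Nat.card_eq_fintype_card]
    rw [← Fintype.card_coe]
    apply Fintype.card_congr
    exact Equiv.subtypeEquivRight (fun c => (hmemCF c).symm)
  have hCq : ∀ j, CF.card = q ^ (Is j).card := by
    intro j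
    have e1 : Nat.card C = Nat.card ({x : Fin n // x ∈ Is j} → F) := by
      calc Nat.card C
          = Nat.card (Set.univ : Set ({x : Fin n // x ∈ Is j} → F)) :=
            Nat.card_congr ((hbij j).equiv _)
        _ = Nat.card ({x : Fin n // x ∈ Is j} → F) := Nat.card_congr (Equiv.Set.univ _)
    rw [← hNcard, e1, Nat.card_eq_fintype_card, Fintype.card_fun, Fintype.card_coe, hqcard]
  have hIk : ∀ j, (Is j).card = k₀ := by
    intro j
    have := (hCq j).symm.trans (hCq j₀)
    exact Nat.pow_right_injective hq2 this
  have hmk : m * k₀ = t * n := by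
    have := doubleCount Is hcount (fun _ => True)
    simpa [Finset.filter_true_of_mem, hIk, Finset.sum_const, Finset.card_univ] using this
  have hkk : k = (k₀ : ℝ) := by
    rw [hk, hNcard, hCq j₀, hk₀def]
    push_cast
    rw [Real.logb_pow]
    have hq1 : (1:ℝ) < q := by exact_mod_cast hq2
    rw [Real.logb_self_eq_one hq1]
    ring
  -- basic positivity facts
  have hqR : (2:ℝ) ≤ q := by exact_mod_cast hq2
  have hδ1' : δ < 1 := by
    have : (0:ℝ) < 1/q := by positivity
    linarith
  have h1δ : (0:ℝ) < 1 - δ := by linarith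
  have hq1pos : (0:ℝ) < (q:ℝ) - 1 := by linarith
  set μ : ℝ := δ / ((1 - δ) * ((q:ℝ) - 1)) with hμdef
  have hμ0 : 0 < μ := by positivity
  have hμ1 : μ < 1 := by
    rw [hμdef, div_lt_one (by positivity)]
    have hq0 : (0:ℝ) < q := by exact_mod_cast Nat.lt_of_lt_of_le Nat.zero_lt_two hq2
    have h := mul_lt_mul_of_pos_right hδ1 hq0
    rw [sub_mul, one_mul, div_mul_cancel₀ _ (ne_of_gt hq0)] at h
    nlinarith [h]
  have hA : 1 + ((q:ℝ) - 1) * μ = (1 - δ)⁻¹ := by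
    rw [hμdef]
    field_simp
    ring
  -- weight of projections
  set wj : (Fin n → F) → Fin m → ℕ :=
    fun c j => hammingNorm (fun i : {x : Fin n // x ∈ Is j} => c i.1) with hwjdef
  have hwj_eq : ∀ c j, wj c j = ((Is j).filter fun i => c i ≠ 0).card := by
    intro c j
    rw [hwjdef]
    apply Finset.card_bij (fun (a : {x : Fin n // x ∈ Is j}) _ => a.1)
    · intro a ha
      simp only [Finset.mem_filter, Finset.mem_univ, true_and] at ha ⊢
      exact ⟨a.2, ha⟩
    · intro a _ b _ hab
      exact Subtype.ext hab
    · intro b hb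
      simp only [Finset.mem_filter] at hb
      exact ⟨⟨b, hb.1⟩, by simp [hb.2], rfl⟩
  have hwsum : ∀ c, ∑ j, wj c j = t * hammingNorm c := by
    intro c
    simp_rw [hwj_eq]
    exact doubleCount Is hcount (fun i => c i ≠ 0)
  -- projection sum identity
  have hproj : ∀ j, ∑ c ∈ CF, μ ^ (wj c j) = (1 + ((q:ℝ) - 1) * μ) ^ k₀ := by
    intro j
    have hbj := hbij j
    have hsum : ∑ x : {x : Fin n // x ∈ Is j} → F, μ ^ hammingNorm x
        = (1 + ((q:ℝ) - 1) * μ) ^ k₀ := by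
      rw [lemA, Fintype.card_coe, hIk j, hqcard]
    rw [← hsum]
    apply Finset.sum_bij
      (fun (c : Fin n → F) (_ : c ∈ CF) => fun i : {x : Fin n // x ∈ Is j} => c i.1)
    · intro a _; exact Finset.mem_univ _
    · intro a ha b hb hab
      exact hbj.injOn ((hmemCF a).1 ha) ((hmemCF b).1 hb) hab
    · intro x _
      obtain ⟨c, hc, hcx⟩ := hbj.surjOn (Set.mem_univ x)
      exact ⟨c, (hmemCF c).2 hc, hcx⟩
    · intro a _; rfl
  have hmR : (0:ℝ) < m := by exact_mod_cast hm
  have hjensen : ∀ c : Fin n → F,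
      μ ^ (((t : ℝ) * hammingNorm c) / m) ≤ (1/(m:ℝ)) * ∑ j, μ ^ (wj c j) := by
    intro c
    have h := convexOn_exp.map_sum_le (t := (univ : Finset (Fin m)))
      (w := fun _ => 1/(m:ℝ)) (p := fun j => (wj c j : ℝ) * Real.log μ)
      (fun i _ => by positivity)
      (by rw [Finset.sum_const, Finset.card_univ, Fintype.card_fin, nsmul_eq_mul]; field_simp)
      (fun i _ => Set.mem_univ _)
    have hL : ∑ j, (1/(m:ℝ)) • ((wj c j : ℝ) * Real.log μ)
        = (((t:ℝ) * hammingNorm c) / m) * Real.log μ := by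
      simp only [smul_eq_mul]
      have hws : ∑ j, (wj c j : ℝ) = (t:ℝ) * hammingNorm c := by
        exact_mod_cast hwsum c
      rw [← Finset.mul_sum, ← Finset.sum_mul, hws]
      ring
    rw [hL] at h
    have hLe : Real.exp ((((t:ℝ) * hammingNorm c) / m) * Real.log μ)
        = μ ^ (((t : ℝ) * hammingNorm c) / m) := by
      rw [Real.rpow_def_of_pos hμ0, mul_comm]
    have hRe : ∀ j : Fin m, Real.exp ((wj c j : ℝ) * Real.log μ) = μ ^ (wj c j) := by
      intro j
      rw [← Real.rpow_natCast μ (wj c j), Real.rpow_def_of_pos hμ0, mul_comm]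
    rw [hLe] at h
    refine h.trans (le_of_eq ?_)
    rw [Finset.mul_sum]
    exact Finset.sum_congr rfl fun j _ => by rw [smul_eq_mul, hRe j]
  -- the low-weight set as a Finset
  set lowF : Finset (Fin n → F) :=
    Finset.univ.filter (fun c => c ∈ C ∧ (hammingNorm c : ℝ) ≤ δ * n) with hlowdef
  have hlowcard : (Nat.card {c : Fin n → F // c ∈ C ∧ (hammingNorm c : ℝ) ≤ δ * n}) 
      = lowF.card := by
    rw [Nat.card_eq_fintype_card, Fintype.card_subtype]
  have hlowsub : lowF ⊆ CF := by
    intro c hc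
    rw [hlowdef, Finset.mem_filter] at hc
    exact (hmemCF c).2 hc.2.1
  -- Markov / chain
  have hchain : (lowF.card : ℝ) * μ ^ ((δ * k₀ : ℝ)) ≤ (1 + ((q:ℝ) - 1) * μ) ^ k₀ := by
    have step1 : (lowF.card : ℝ) * μ ^ ((δ * k₀ : ℝ))
        ≤ ∑ c ∈ lowF, μ ^ (((t : ℝ) * hammingNorm c) / m) := by
      rw [show (lowF.card : ℝ) * μ ^ ((δ * k₀ : ℝ)) = ∑ _c ∈ lowF, μ ^ ((δ * k₀ : ℝ)) by
        rw [Finset.sum_const, nsmul_eq_mul]]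
      apply Finset.sum_le_sum
      intro c hc
      apply Real.rpow_le_rpow_of_exponent_ge hμ0 hμ1.le
      rw [hlowdef, Finset.mem_filter] at hc
      have hcw : (hammingNorm c : ℝ) ≤ δ * n := hc.2.2
      have hmkR : (m:ℝ) * k₀ = (t:ℝ) * n := by exact_mod_cast hmk
      rw [div_le_iff₀ hmR]
      have ht0 : (0:ℝ) ≤ t := Nat.cast_nonneg t
      nlinarith [hcw, hmkR]
    have step2 : ∑ c ∈ lowF, μ ^ (((t : ℝ) * hammingNorm c) / m)
        ≤ ∑ c ∈ CF, μ ^ (((t : ℝ) * hammingNorm c) / m) :=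
      Finset.sum_le_sum_of_subset_of_nonneg hlowsub
        (fun c _ _ => Real.rpow_nonneg hμ0.le _)
    have step3 : ∑ c ∈ CF, μ ^ (((t : ℝ) * hammingNorm c) / m)
        ≤ ∑ c ∈ CF, (1/(m:ℝ)) * ∑ j, μ ^ (wj c j) :=
      Finset.sum_le_sum fun c _ => hjensen c
    have step4 : ∑ c ∈ CF, (1/(m:ℝ)) * ∑ j, μ ^ (wj c j)
        = (1 + ((q:ℝ) - 1) * μ) ^ k₀ := by
      rw [← Finset.mul_sum, Finset.sum_comm]
      rw [Finset.sum_congr rfl fun j _ => hproj j, Finset.sum_const, Finset.card_univ, Fintype.card_fin,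
        nsmul_eq_mul]
      field_simp
    calc (lowF.card : ℝ) * μ ^ ((δ * k₀ : ℝ)) ≤ _ := step1
      _ ≤ _ := step2
      _ ≤ _ := step3
      _ = _ := step4
  -- final identity and conclusion
  have hμpow : (0:ℝ) < μ ^ ((δ * k₀ : ℝ)) := Real.rpow_pos_of_pos hμ0 _
  have hq0 : (0:ℝ) < q := by linarith
  have hfin : (q:ℝ) ^ (k * entropy q δ) * μ ^ ((δ * k₀ : ℝ))
      = (1 + ((q:ℝ) - 1) * μ) ^ k₀ := by
    rw [hA, ← Real.rpow_natCast ((1-δ)⁻¹) k₀]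
    rw [Real.rpow_def_of_pos hq0, Real.rpow_def_of_pos hμ0,
      Real.rpow_def_of_pos (by positivity : (0:ℝ) < (1-δ)⁻¹), ← Real.exp_add]
    congr 1
    have hlogq : (0:ℝ) < Real.log q := Real.log_pos (by linarith)
    have hlogq' : Real.log q ≠ 0 := ne_of_gt hlogq
    have hlogμ : Real.log μ = Real.log δ - (Real.log (1-δ) + Real.log ((q:ℝ)-1)) := by
      rw [hμdef, Real.log_div (ne_of_gt hδ0) (by positivity),
        Real.log_mul (ne_of_gt h1δ) (ne_of_gt hq1pos)]
    rw [hlogμ, hkk, Real.log_inv]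
    simp only [entropy, Real.logb]
    field_simp
    ring
  rw [← hfin] at hchain
  have hfinal := le_of_mul_le_mul_right hchain hμpow
  rw [hlowcard]
  exact_mod_cast hfinal
end

section
/- The map τ_{λ,α} : 𝓘 → 𝓘_{λ,α}, sending the class of f(X) in 𝓘 to the class of f(X/λ^{1/(αn)})·ψ_{λ,α}(X) in 𝓘_{λ,α}, is well defined (independent of the representative f), additive, bijective, and satisfies τ_{λ,α}(g(X)·f(X)) = σ_λ(g(X))·τ_{λ,α}(f(X)) for all g(X) ∈ F[X], i.e. it is a σ_λ-semilinear F[X]-module isomorphism. In particular dim_F 𝓘 = dim_F 𝓘_{λ,α} = n − 1. -/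
open Polynomial

/-- The quotient ring `F[X]/⟨X^N − c⟩`. -/
abbrev QA (F : Type*) [CommRing F] (N : ℕ) (c : F) : Type _ :=
  Polynomial F ⧸ Ideal.span {(X : Polynomial F) ^ N - C c}

/-- `ψ_{λ,α}(X) = Σ_{j=0}^{α−1} X^{n(α−1−j)}·(λ^{1/α})^j`, where `lam1a = λ^{1/α}`. -/
noncomputable def psiP (F : Type*) [Field F] (lam1a : F) (n a : ℕ) : Polynomial F :=
  ∑ j ∈ Finset.range a, (X : Polynomial F) ^ (n * (a - 1 - j)) * C (lam1a ^ j)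

/-- `ψ⁺_{λ,α}(X) = ((X/λ^{1/(αn)}) − 1)·ψ_{λ,α}(X)`, where `μ = λ^{1/(αn)}`. -/
noncomputable def psiPlusP (F : Type*) [Field F] (μ lam1a : F) (n a : ℕ) : Polynomial F :=
  (C μ⁻¹ * X - 1) * psiP F lam1a n a

/-- `σ_λ : F[X] → F[X]`, `f(X) ↦ f(X/λ^{1/(αn)})`, where `μ = λ^{1/(αn)}`. -/
noncomputable def sigmaP {F : Type*} [Field F] (μ : F) (f : Polynomial F) : Polynomial F :=
  f.comp (C μ⁻¹ * X)

/-- The ideal `𝓘 = 𝓡·(X−1)` of `𝓡 = F[X]/⟨X^n − 1⟩`. -/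
noncomputable def Jcyc (F : Type*) [Field F] (n : ℕ) : Ideal (QA F n 1) :=
  Ideal.span {Ideal.Quotient.mk (Ideal.span {(X : Polynomial F) ^ n - C 1}) (X - 1)}

/-- The ideal `𝓘_{λ,α} = 𝓡_{λ,α}·ψ⁺_{λ,α}(X)` of `𝓡_{λ,α} = F[X]/⟨X^{αn} − λ⟩`,
where `μ = λ^{1/(αn)}` (so `λ^{1/α} = μ^n`). -/
noncomputable def Jtw (F : Type*) [Field F] (lam μ : F) (n a : ℕ) : Ideal (QA F (a * n) lam) :=
  Ideal.span {Ideal.Quotient.mk (Ideal.span {(X : Polynomial F) ^ (a * n) - C lam})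
    (psiPlusP F μ (μ ^ n) n a)}

section Aux
variable {F : Type*} [Field F]

lemma psiP_mul_aux (c : F) (n a : ℕ) :
    psiP F c n a * ((X : F[X]) ^ n - C c) = X ^ (a * n) - C (c ^ a) := by
  have h : psiP F c n a = ∑ j ∈ Finset.range a, (C c) ^ j * ((X : F[X]) ^ n) ^ (a - 1 - j) := by
    rw [psiP]
    refine Finset.sum_congr rfl fun j hj => ?_
    rw [pow_mul, C_pow, mul_comm]
  have h2 := geom_sum₂_mul (C c) ((X : F[X]) ^ n) a
  rw [← pow_mul, ← C_pow, Nat.mul_comm n a] at h2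
  rw [h]
  linear_combination -h2

lemma sigmaP_mul (μ : F) (f g : F[X]) : sigmaP μ (f * g) = sigmaP μ f * sigmaP μ g :=
  mul_comp f g _

lemma sigma_key (μ : F) (hμ : μ ≠ 0) (n a : ℕ) :
    sigmaP μ ((X : F[X]) ^ n - C 1) * psiP F (μ ^ n) n a
      = C ((μ ^ n)⁻¹) * ((X : F[X]) ^ (a * n) - C (μ ^ (a * n))) := by
  have hμn : (μ ^ n) ≠ 0 := pow_ne_zero _ hμ
  have h1 : sigmaP μ ((X : F[X]) ^ n - C 1) = C ((μ ^ n)⁻¹) * ((X : F[X]) ^ n - C (μ ^ n)) := by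
    rw [sigmaP, sub_comp, pow_comp, X_comp, C_comp, mul_pow, ← C_pow, inv_pow,
      mul_sub, ← C_mul, inv_mul_cancel₀ hμn, C_1]
  rw [h1, mul_assoc, mul_comm ((X : F[X]) ^ n - C (μ ^ n)), psiP_mul_aux, ← pow_mul,
    Nat.mul_comm n a]

lemma sigmaP_surj_inv (μ : F) (hμ : μ ≠ 0) (f : F[X]) :
    sigmaP μ (f.comp (C μ * X)) = f := by
  rw [sigmaP, comp_assoc, mul_comp, C_comp, X_comp, ← mul_assoc, ← C_mul,
    mul_inv_cancel₀ hμ, C_1, one_mul, comp_X]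

lemma sigmaP_left_inv (μ : F) (hμ : μ ≠ 0) (f : F[X]) :
    (sigmaP μ f).comp (C μ * X) = f := by
  rw [sigmaP, comp_assoc, mul_comp, C_comp, X_comp, ← mul_assoc, ← C_mul,
    inv_mul_cancel₀ hμ, C_1, one_mul, comp_X]

lemma sigmaP_inj (μ : F) (hμ : μ ≠ 0) : Function.Injective (sigmaP μ) := fun f g h => by
  have := congrArg (fun p => p.comp (C μ * X)) h
  simpa only [sigmaP_left_inv μ hμ] using this

lemma sigmaP_X_sub_one (μ : F) : sigmaP μ ((X : F[X]) - 1) = C μ⁻¹ * X - 1 := by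
  rw [sigmaP, sub_comp, X_comp, one_comp]

lemma finrank_QA (N : ℕ) (hN : N ≠ 0) (c : F) : Module.finrank F (QA F N c) = N := by
  have hm : ((X : F[X]) ^ N - C c).Monic := monic_X_pow_sub_C c hN
  have := (AdjoinRoot.powerBasis' hm).finrank
  rwa [AdjoinRoot.powerBasis'_dim, natDegree_X_pow_sub_C] at this

lemma fd_QA (N : ℕ) (hN : N ≠ 0) (c : F) : FiniteDimensional F (QA F N c) :=
  Module.Finite.of_basis (AdjoinRoot.powerBasis' (monic_X_pow_sub_C c hN)).basis

end Aux

set_option maxHeartbeats 1600000 in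
/-- The map `τ_{λ,α} : 𝓘 → 𝓘_{λ,α}`, sending the class of `f(X)` in `𝓘` to
the class of `f(X/λ^{1/(αn)})·ψ_{λ,α}(X)` in `𝓘_{λ,α}`, is well defined (independent of the
representative `f`), additive, bijective, and satisfies
`τ_{λ,α}(g(X)·f(X)) = σ_λ(g(X))·τ_{λ,α}(f(X))` for all `g(X) ∈ F[X]`, i.e. it is a
`σ_λ`-semilinear `F[X]`-module isomorphism.  In particular
`dim_F 𝓘 = dim_F 𝓘_{λ,α} = n − 1`. -/
theorem stmt9 {F : Type*} [Field F] [Fintype F]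
    (q : ℕ) (hq : q = Fintype.card F)
    (lam : Fˣ) (t : ℕ) (ht : t = orderOf lam)
    (α n : ℕ) (hα : 0 < α) (hn : 0 < n)
    (hαt : Nat.gcd α t = 1) (hnqt : Nat.gcd n (q * t) = 1)
    (μ : Fˣ) (hμ : μ ∈ Subgroup.zpowers lam) (hμpow : μ ^ (α * n) = lam) :
    (∃ τ : Jcyc F n →+ Jtw F (lam : F) (μ : F) n α,
      (∀ (f : Polynomial F)
          (hf : Ideal.Quotient.mk (Ideal.span {(X : Polynomial F) ^ n - C 1}) f ∈ Jcyc F n),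
        (τ ⟨Ideal.Quotient.mk _ f, hf⟩ : QA F (α * n) (lam : F)) =
          Ideal.Quotient.mk (Ideal.span {(X : Polynomial F) ^ (α * n) - C (lam : F)})
            (sigmaP (μ : F) f * psiP F ((μ : F) ^ n) n α)) ∧
      Function.Bijective τ ∧
      (∀ (g : Polynomial F) (x : Jcyc F n),
        (τ ⟨Ideal.Quotient.mk (Ideal.span {(X : Polynomial F) ^ n - C 1}) g * (x : QA F n 1),
            (Jcyc F n).mul_mem_left _ x.2⟩ : QA F (α * n) (lam : F)) =
          Ideal.Quotient.mk (Ideal.span {(X : Polynomial F) ^ (α * n) - C (lam : F)})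
            (sigmaP (μ : F) g) * (τ x : QA F (α * n) (lam : F)))) ∧
    Module.finrank F (Jcyc F n) = n - 1 ∧
    Module.finrank F (Jtw F (lam : F) (μ : F) n α) = n - 1 := by
  classical
  have hμ0 : (μ : F) ≠ 0 := μ.ne_zero
  have hlam : ((μ : F)) ^ (α * n) = (lam : F) := by
    exact_mod_cast congrArg Units.val hμpow
  set I : Ideal F[X] := Ideal.span {(X : F[X]) ^ n - C 1} with hI
  set J : Ideal F[X] := Ideal.span {(X : F[X]) ^ (α * n) - C (lam : F)} with hJ
  set ψ : F[X] := psiP F ((μ : F) ^ n) n α with hψ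
  have hgenJ : (X : F[X]) ^ (α * n) - C (lam : F) ∈ J := Ideal.subset_span rfl
  -- the linear map on polynomials
  let Φlin : F[X] →ₗ[F] QA F (α * n) (lam : F) :=
    (Ideal.Quotient.mkₐ F J).toLinearMap.comp
      ((LinearMap.mulRight F ψ).comp (aeval (C (μ : F)⁻¹ * X) : F[X] →ₐ[F] F[X]).toLinearMap)
  have Φlin_apply : ∀ f : F[X], Φlin f = Ideal.Quotient.mk J (sigmaP (μ : F) f * ψ) :=
    fun _ => rfl
  have hker : I.restrictScalars F ≤ LinearMap.ker Φlin := by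
    intro x hx
    have hx' : x ∈ I := hx
    rw [hI, Ideal.mem_span_singleton] at hx'
    obtain ⟨k, rfl⟩ := hx'
    rw [LinearMap.mem_ker, Φlin_apply]
    have hs : sigmaP (μ : F) (((X : F[X]) ^ n - C 1) * k) * ψ =
        (sigmaP (μ : F) k * C (((μ : F) ^ n)⁻¹)) * ((X : F[X]) ^ (α * n) - C (lam : F)) := by
      rw [sigmaP_mul, mul_comm (sigmaP (μ : F) _) (sigmaP (μ : F) k), mul_assoc,
        sigma_key (μ : F) hμ0 n α, hlam, mul_assoc]
    rw [hs, Ideal.Quotient.eq_zero_iff_mem]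
    exact Ideal.mul_mem_left _ _ hgenJ
  -- descended map on the quotient
  let Φq : QA F n 1 →ₗ[F] QA F (α * n) (lam : F) :=
    (Submodule.liftQ (I.restrictScalars F) Φlin hker).comp
      (Submodule.Quotient.restrictScalarsEquiv F I).symm.toLinearMap
  have Φq_mk : ∀ f : F[X],
      Φq (Ideal.Quotient.mk I f) = Ideal.Quotient.mk J (sigmaP (μ : F) f * ψ) := fun f => rfl
  -- membership characterizations
  have hmemJcyc : ∀ x : QA F n 1,
      x ∈ Jcyc F n ↔ ∃ g : F[X], x = Ideal.Quotient.mk I (g * (X - 1)) := by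
    intro x
    constructor
    · intro hx
      obtain ⟨a, ha⟩ := Ideal.mem_span_singleton'.mp hx
      obtain ⟨g, rfl⟩ := Ideal.Quotient.mk_surjective a
      exact ⟨g, by rw [← ha, ← map_mul]⟩
    · rintro ⟨g, rfl⟩
      exact Ideal.mem_span_singleton'.mpr ⟨Ideal.Quotient.mk I g, by rw [← map_mul]⟩
  have hσψplus : ∀ g : F[X], sigmaP (μ : F) (g * ((X : F[X]) - 1)) * ψ =
      sigmaP (μ : F) g * psiPlusP F (μ : F) ((μ : F) ^ n) n α := by
    intro g
    rw [sigmaP_mul, sigmaP_X_sub_one, psiPlusP, mul_assoc]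
  have hΦmem : ∀ x ∈ Jcyc F n, Φq x ∈ Jtw F (lam : F) (μ : F) n α := by
    intro x hx
    obtain ⟨g, rfl⟩ := (hmemJcyc x).mp hx
    rw [Φq_mk, hσψplus, map_mul]
    exact Ideal.mul_mem_left _ _ (Ideal.subset_span rfl)
  -- the linear map between the ideals
  let L : Jcyc F n →ₗ[F] Jtw F (lam : F) (μ : F) n α :=
    { toFun := fun x => ⟨Φq x.1, hΦmem x.1 x.2⟩
      map_add' := fun x y => Subtype.ext (map_add Φq x.1 y.1)
      map_smul' := fun c x => Subtype.ext (map_smul Φq c x.1) }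
  -- psi is nonzero
  have hψ0 : ψ ≠ 0 := by
    intro h0
    have h2 := psiP_mul_aux ((μ : F) ^ n) n α
    rw [← hψ, h0, zero_mul] at h2
    have h3 : ((X : F[X]) ^ (α * n) - C (((μ : F) ^ n) ^ α)).Monic :=
      monic_X_pow_sub_C _ (by positivity)
    exact h3.ne_zero h2.symm
  -- injectivity
  have hinj0 : ∀ x ∈ Jcyc F n, Φq x = 0 → x = 0 := by
    intro x hx hx0
    obtain ⟨g, rfl⟩ := (hmemJcyc x).mp hx
    rw [Φq_mk, Ideal.Quotient.eq_zero_iff_mem, hJ, Ideal.mem_span_singleton] at hx0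
    obtain ⟨k, hk⟩ := hx0
    have hgen : (X : F[X]) ^ (α * n) - C (lam : F) =
        C ((μ : F) ^ n) * (sigmaP (μ : F) ((X : F[X]) ^ n - C 1) * ψ) := by
      rw [sigma_key (μ : F) hμ0 n α, hlam, ← mul_assoc, ← C_mul,
        mul_inv_cancel₀ (pow_ne_zero n hμ0), C_1, one_mul]
    have hk2 : sigmaP (μ : F) (g * ((X : F[X]) - 1)) * ψ =
        (C ((μ : F) ^ n) * sigmaP (μ : F) ((X : F[X]) ^ n - C 1) * k) * ψ := by
      rw [hk, hgen]; ring
    have hk3 : sigmaP (μ : F) (g * ((X : F[X]) - 1)) =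
        C ((μ : F) ^ n) * sigmaP (μ : F) ((X : F[X]) ^ n - C 1) * k :=
      mul_right_cancel₀ hψ0 hk2
    have hC : sigmaP (μ : F) (C ((μ : F) ^ n)) = C ((μ : F) ^ n) := by rw [sigmaP, C_comp]
    have hk4 : sigmaP (μ : F) (C ((μ : F) ^ n) * ((X : F[X]) ^ n - C 1) *
          (k.comp (C (μ : F) * X))) = sigmaP (μ : F) (g * ((X : F[X]) - 1)) := by
      rw [sigmaP_mul, sigmaP_mul, sigmaP_surj_inv (μ : F) hμ0, hC, hk3]
    have hk5 := (sigmaP_inj (μ : F) hμ0 hk4).symm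
    rw [Ideal.Quotient.eq_zero_iff_mem, hI, Ideal.mem_span_singleton]
    exact ⟨C ((μ : F) ^ n) * (k.comp (C (μ : F) * X)), by rw [hk5]; ring⟩
  have hLinj : Function.Injective L := by
    intro x y hxy
    have h1 : Φq (x.1 - y.1) = 0 := by
      rw [map_sub, sub_eq_zero]
      exact congrArg Subtype.val hxy
    have h2 : x.1 - y.1 ∈ Jcyc F n := sub_mem x.2 y.2
    have := hinj0 _ h2 h1
    exact Subtype.ext (by rwa [sub_eq_zero] at this)
  have hLsurj : Function.Surjective L := by
    intro y
    obtain ⟨a, ha⟩ := Ideal.mem_span_singleton'.mp y.2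
    obtain ⟨g, rfl⟩ := Ideal.Quotient.mk_surjective a
    refine ⟨⟨Ideal.Quotient.mk I ((g.comp (C (μ : F) * X)) * (X - 1)),
      (hmemJcyc _).mpr ⟨g.comp (C (μ : F) * X), rfl⟩⟩, ?_⟩
    apply Subtype.ext
    show Φq (Ideal.Quotient.mk I ((g.comp (C (μ : F) * X)) * (X - 1))) = y.1
    rw [Φq_mk, hσψplus, sigmaP_surj_inv (μ : F) hμ0, ← ha, ← map_mul]
  let e : (Jcyc F n) ≃ₗ[F] (Jtw F (lam : F) (μ : F) n α) :=
    LinearEquiv.ofBijective L ⟨hLinj, hLsurj⟩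
  -- evaluation at 1 for the finrank computation
  have hIeval : ∀ a ∈ I, aeval (1 : F) a = 0 := by
    intro a ha
    rw [hI, Ideal.mem_span_singleton] at ha
    obtain ⟨k, rfl⟩ := ha
    simp
  let Ev : QA F n 1 →ₐ[F] F := Ideal.Quotient.liftₐ I (aeval (1 : F)) hIeval
  have hEvmk : ∀ f : F[X], Ev (Ideal.Quotient.mk I f) = f.eval 1 := by
    intro f
    show Ideal.Quotient.liftₐ I (aeval (1 : F)) hIeval (Ideal.Quotient.mk I f) = _
    show aeval (1 : F) f = _
    simp [coe_aeval_eq_eval]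
  have hkerEv : LinearMap.ker Ev.toLinearMap = (Jcyc F n).restrictScalars F := by
    ext x
    obtain ⟨f, rfl⟩ := Ideal.Quotient.mk_surjective x
    simp only [LinearMap.mem_ker, Submodule.restrictScalars_mem]
    constructor
    · intro h
      rw [show Ev.toLinearMap (Ideal.Quotient.mk I f) = Ev (Ideal.Quotient.mk I f) from rfl,
        hEvmk] at h
      have hdvd : (X - C (1 : F)) ∣ f := dvd_iff_isRoot.mpr h
      obtain ⟨k, hk⟩ := hdvd
      exact (hmemJcyc _).mpr ⟨k, congrArg _ (by rw [hk, C_1, mul_comm])⟩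
    · intro h
      obtain ⟨g, hg⟩ := (hmemJcyc _).mp h
      rw [show Ev.toLinearMap (Ideal.Quotient.mk I f) = Ev (Ideal.Quotient.mk I f) from rfl,
        hg, hEvmk]
      simp
  have hEvsurj : Function.Surjective Ev.toLinearMap := by
    intro c
    exact ⟨Ideal.Quotient.mk I (C c), by rw [show Ev.toLinearMap _ = Ev _ from rfl, hEvmk, eval_C]⟩
  have hfd : FiniteDimensional F (QA F n 1) := fd_QA n hn.ne' 1
  have hrange : LinearMap.range Ev.toLinearMap = ⊤ := LinearMap.range_eq_top.mpr hEvsurj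
  have hrank := Ev.toLinearMap.finrank_range_add_finrank_ker
  rw [hrange, finrank_top, Module.finrank_self, hkerEv] at hrank
  have hQA : Module.finrank F (QA F n 1) = n := finrank_QA n hn.ne' 1
  rw [hQA] at hrank
  have hJcycR : Module.finrank F ((Jcyc F n).restrictScalars F) = n - 1 := by omega
  have hJcycEq : Module.finrank F (Jcyc F n) = n - 1 := by
    rw [← hJcycR]
    exact ((Submodule.restrictScalarsEquiv F (QA F n 1) (QA F n 1)
      (Jcyc F n)).restrictScalars F).symm.finrank_eq
  have hJtwEq : Module.finrank F (Jtw F (lam : F) (μ : F) n α) = n - 1 := by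
    rw [← hJcycEq]
    exact e.symm.finrank_eq
  refine ⟨⟨e.toLinearMap.toAddMonoidHom, ?_, ⟨fun a b h => hLinj h, fun y => hLsurj y⟩, ?_⟩,
    hJcycEq, hJtwEq⟩
  · intro f hf
    exact Φq_mk f
  · intro g x
    obtain ⟨f, hfx⟩ := Ideal.Quotient.mk_surjective (x : QA F n 1)
    show Φq (Ideal.Quotient.mk I g * (x : QA F n 1)) =
      Ideal.Quotient.mk J (sigmaP (μ : F) g) * Φq (x : QA F n 1)
    rw [← hfx, ← map_mul, Φq_mk, Φq_mk, sigmaP_mul, ← map_mul, mul_assoc]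
end

section
/- For every integer d with μ(n) ≤ d ≤ n − 1, the number of F[X]-submodules of 𝓘 of F-dimension d is at most n^{d/μ(n)}. -/
open Polynomial UniqueFactorizationMonoid

/-- `μ(n)`: the minimum degree of a monic irreducible divisor of `X^n − 1` other than
`X − 1` (i.e. `min{deg φ₁, …, deg φ_m}` in the factorization
`X^n − 1 = (X−1)·φ₁⋯φ_m`). -/
noncomputable def mun (F : Type*) [Field F] (n : ℕ) : ℕ :=
  sInf {d : ℕ | ∃ g : Polynomial F, g.Monic ∧ Irreducible g ∧
    g ∣ ((X : Polynomial F) ^ n - 1) ∧ g ≠ X - 1 ∧ g.natDegree = d}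

section Helpers
variable {F : Type*} [Field F] [DecidableEq F]

noncomputable def quotRestrictEquiv (I : Ideal (Polynomial F)) :
    (Polynomial F ⧸ I.restrictScalars F) ≃ₗ[F] (Polynomial F ⧸ I) := by
  have h : LinearMap.ker (Ideal.Quotient.mkₐ F I).toLinearMap = I.restrictScalars F := by
    ext x
    simp [LinearMap.mem_ker, Ideal.Quotient.eq_zero_iff_mem]
  exact (Submodule.quotEquivOfEq _ _ h.symm).trans
    (LinearMap.quotKerEquivOfSurjective _ (Ideal.Quotient.mkₐ_surjective F I))

lemma finrank_adjoinRoot (g : Polynomial F) (hg : g ≠ 0) :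
    Module.finrank F (Polynomial F ⧸ Ideal.span {g}) = g.natDegree := by
  have : Module.finrank F (AdjoinRoot g) = g.natDegree := by
    rw [(AdjoinRoot.powerBasis hg).finrank, AdjoinRoot.powerBasis_dim]
  exact this

lemma finrank_quot_restrict (g : Polynomial F) (hg : g ≠ 0) :
    Module.finrank F (Polynomial F ⧸ (Ideal.span {g}).restrictScalars F) = g.natDegree := by
  rw [(quotRestrictEquiv _).finrank_eq, finrank_adjoinRoot g hg]

lemma dim_lemma {n : ℕ} (hn : 0 < n) (CC : Submodule (Polynomial F) (QA F n 1)) :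
    Module.finrank F CC +
      Module.finrank F (Polynomial F ⧸
        (Submodule.comap (Algebra.linearMap (Polynomial F) (QA F n 1)) CC).restrictScalars F)
      = n := by
  set J : Ideal (Polynomial F) := Ideal.span {(X : Polynomial F) ^ n - C 1} with hJ
  have hP0 : ((X : Polynomial F) ^ n - C 1) ≠ 0 := (monic_X_pow_sub_C 1 hn.ne').ne_zero
  haveI : Module.Finite F (QA F n 1) :=
    Module.Finite.of_basis (AdjoinRoot.powerBasis hP0).basis
  have hQA : Module.finrank F (QA F n 1) = n := by
    have : Module.finrank F (AdjoinRoot ((X : Polynomial F) ^ n - C 1)) = n := by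
      rw [(AdjoinRoot.powerBasis hP0).finrank, AdjoinRoot.powerBasis_dim]
      rw [natDegree_X_pow_sub_C]
    exact this
  set CC' := CC.restrictScalars F with hCC'
  set I := Submodule.comap (Algebra.linearMap (Polynomial F) (QA F n 1)) CC with hI
  have h1 : Module.finrank F (QA F n 1 ⧸ CC') + Module.finrank F CC' = n := by
    rw [Submodule.finrank_quotient_add_finrank, hQA]
  have e2 : Module.finrank F CC' = Module.finrank F CC :=
    ((Submodule.restrictScalarsEquiv F (Polynomial F) (QA F n 1) CC).restrictScalars F).finrank_eq
  let σ : Polynomial F →ₗ[F] (QA F n 1 ⧸ CC') :=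
    (CC'.mkQ).comp (Ideal.Quotient.mkₐ F J).toLinearMap
  have hker : LinearMap.ker σ = I.restrictScalars F := by
    ext x
    simp only [σ, LinearMap.mem_ker, LinearMap.comp_apply, AlgHom.toLinearMap_apply,
      Submodule.mkQ_apply, Submodule.Quotient.mk_eq_zero, Ideal.Quotient.mkₐ_eq_mk]
    rfl
  have hsurj : Function.Surjective σ :=
    (Submodule.mkQ_surjective _).comp (Ideal.Quotient.mkₐ_surjective F J)
  have e3 : Module.finrank F (Polynomial F ⧸ I.restrictScalars F)
      = Module.finrank F (QA F n 1 ⧸ CC') :=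
    ((Submodule.quotEquivOfEq _ _ hker.symm).trans
      (LinearMap.quotKerEquivOfSurjective σ hsurj)).finrank_eq
  omega

/-- The comap ideal. -/
noncomputable def Iof (n : ℕ) (CC : Submodule (Polynomial F) (QA F n 1)) :
    Ideal (Polynomial F) :=
  Submodule.comap (Algebra.linearMap (Polynomial F) (QA F n 1)) CC

/-- Monic generator of the comap ideal. -/
noncomputable def gOf (n : ℕ) (CC : Submodule (Polynomial F) (QA F n 1)) : Polynomial F :=
  normalize (Submodule.IsPrincipal.generator (Iof n CC))

/-- Complementary divisor. -/
noncomputable def cOf (n : ℕ) (CC : Submodule (Polynomial F) (QA F n 1)) : Polynomial F :=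
  ((X : Polynomial F) ^ n - C 1) / gOf n CC

lemma span_gOf (n : ℕ) (CC : Submodule (Polynomial F) (QA F n 1)) :
    Ideal.span {gOf n CC} = Iof n CC := by
  rw [gOf, Ideal.span_singleton_eq_span_singleton.mpr (associated_normalize _).symm,
    Ideal.span_singleton_generator]

lemma P_mem_Iof (n : ℕ) (CC : Submodule (Polynomial F) (QA F n 1)) :
    ((X : Polynomial F) ^ n - C 1) ∈ Iof n CC := by
  have h0 : (Algebra.linearMap (Polynomial F) (QA F n 1)) ((X : Polynomial F) ^ n - C 1) = 0 := by
    simp only [Algebra.linearMap_apply, Ideal.Quotient.algebraMap_eq,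
      Ideal.Quotient.eq_zero_iff_mem]
    exact Ideal.subset_span rfl
  show (Algebra.linearMap (Polynomial F) (QA F n 1)) _ ∈ CC
  rw [h0]; exact CC.zero_mem

lemma gOf_dvd (n : ℕ) (CC : Submodule (Polynomial F) (QA F n 1)) :
    gOf n CC ∣ ((X : Polynomial F) ^ n - C 1) := by
  rw [← Ideal.mem_span_singleton, span_gOf]
  exact P_mem_Iof n CC

lemma gOf_ne_zero {n : ℕ} (hn : 0 < n) (CC : Submodule (Polynomial F) (QA F n 1)) :
    gOf n CC ≠ 0 := by
  intro h
  have := gOf_dvd n CC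
  rw [h, zero_dvd_iff] at this
  exact (monic_X_pow_sub_C (1 : F) hn.ne').ne_zero this

lemma gOf_monic {n : ℕ} (hn : 0 < n) (CC : Submodule (Polynomial F) (QA F n 1)) :
    (gOf n CC).Monic := by
  have : Submodule.IsPrincipal.generator (Iof n CC) ≠ 0 := by
    intro h
    exact gOf_ne_zero hn CC (by rw [gOf, h, normalize_zero])
  exact monic_normalize this

lemma gOf_mul_cOf {n : ℕ} (hn : 0 < n) (CC : Submodule (Polynomial F) (QA F n 1)) :
    gOf n CC * cOf n CC = (X : Polynomial F) ^ n - C 1 :=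
  EuclideanDomain.mul_div_cancel' (gOf_ne_zero hn CC) (gOf_dvd n CC)

lemma cOf_monic {n : ℕ} (hn : 0 < n) (CC : Submodule (Polynomial F) (QA F n 1)) :
    (cOf n CC).Monic :=
  (gOf_monic hn CC).of_mul_monic_left
    (by rw [gOf_mul_cOf hn CC]; exact monic_X_pow_sub_C 1 hn.ne')

set_option linter.unusedSectionVars false

lemma CC_eq_of_cOf_eq {n : ℕ} (hn : 0 < n) {CC₁ CC₂ : Submodule (Polynomial F) (QA F n 1)}
    (h : cOf n CC₁ = cOf n CC₂) : CC₁ = CC₂ := by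
  have hc0 : cOf n CC₂ ≠ 0 := (cOf_monic hn CC₂).ne_zero
  have hg : gOf n CC₁ = gOf n CC₂ := by
    apply mul_right_cancel₀ hc0
    rw [← h, gOf_mul_cOf hn CC₁, h, gOf_mul_cOf hn CC₂]
  have hI : Iof n CC₁ = Iof n CC₂ := by
    rw [← span_gOf, ← span_gOf, hg]
  have hsurj : Function.Surjective (Algebra.linearMap (Polynomial F) (QA F n 1)) :=
    Ideal.Quotient.mk_surjective
  have h1 := Submodule.map_comap_eq_of_surjective hsurj CC₁
  have h2 := Submodule.map_comap_eq_of_surjective hsurj CC₂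
  rw [← h1, ← h2]
  exact congrArg _ hI

lemma natDegree_cOf {n : ℕ} (hn : 0 < n) (CC : Submodule (Polynomial F) (QA F n 1))
    {d : ℕ} (hdim : Module.finrank F CC = d) : (cOf n CC).natDegree = d := by
  have h1 := dim_lemma hn CC
  rw [hdim] at h1
  have h2 : Module.finrank F (Polynomial F ⧸
      (Submodule.comap (Algebra.linearMap (Polynomial F) (QA F n 1)) CC).restrictScalars F)
      = (gOf n CC).natDegree := by
    rw [show (Submodule.comap (Algebra.linearMap (Polynomial F) (QA F n 1)) CC)
        = Ideal.span {gOf n CC} from (span_gOf n CC).symm]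
    exact finrank_quot_restrict _ (gOf_ne_zero hn CC)
  have h3 : (gOf n CC).natDegree + (cOf n CC).natDegree = n := by
    rw [← natDegree_mul (gOf_ne_zero hn CC) (cOf_monic hn CC).ne_zero, gOf_mul_cOf hn CC,
      natDegree_X_pow_sub_C]
  omega

lemma X_sub_one_dvd_gOf {n : ℕ} (CC : Submodule (Polynomial F) (QA F n 1))
    (hsub : (CC : Set (QA F n 1)) ⊆ (Jcyc F n : Set (QA F n 1))) :
    (X - 1 : Polynomial F) ∣ gOf n CC := by
  set J : Ideal (Polynomial F) := Ideal.span {(X : Polynomial F) ^ n - C 1} with hJ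
  have hgI : gOf n CC ∈ Iof n CC := by
    rw [← span_gOf]; exact Ideal.subset_span rfl
  have hmem : Ideal.Quotient.mk J (gOf n CC) ∈ Jcyc F n := by
    apply hsub
    exact hgI
  rw [Jcyc, Ideal.mem_span_singleton] at hmem
  obtain ⟨a, ha⟩ := hmem
  obtain ⟨h, rfl⟩ := Ideal.Quotient.mk_surjective a
  have : Ideal.Quotient.mk J (gOf n CC - (X - 1) * h) = 0 := by
    rw [map_sub, ha, map_mul]; ring
  rw [Ideal.Quotient.eq_zero_iff_mem, hJ, Ideal.mem_span_singleton] at this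
  obtain ⟨e, he⟩ := this
  have hX1P : (X - 1 : Polynomial F) ∣ (X : Polynomial F) ^ n - C 1 := by
    simpa using sub_dvd_pow_sub_pow (X : Polynomial F) 1 n
  have : gOf n CC = (X - 1) * h + ((X : Polynomial F) ^ n - C 1) * e := by
    rw [← he]; ring
  rw [this]
  exact dvd_add (Dvd.intro _ rfl) (Dvd.dvd.mul_right (hX1P) e)

lemma factors_cOf {n : ℕ} (hn : 0 < n) (hsq : Squarefree ((X : Polynomial F) ^ n - C 1))
    (CC : Submodule (Polynomial F) (QA F n 1))
    (hsub : (CC : Set (QA F n 1)) ⊆ (Jcyc F n : Set (QA F n 1))) :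
    ∀ p ∈ normalizedFactors (cOf n CC),
      p.Monic ∧ Irreducible p ∧ p ∣ ((X : Polynomial F) ^ n - C 1) ∧ p ≠ X - 1 := by
  intro p hp
  have hirr : Irreducible p := irreducible_of_normalized_factor p hp
  have hp0 : p ≠ 0 := fun h => (h ▸ zero_notMem_normalizedFactors _) hp
  have hmon : p.Monic := by
    have := normalize_normalized_factor p hp
    rw [← this]; exact monic_normalize hp0
  have hdvdc : p ∣ cOf n CC := dvd_of_mem_normalizedFactors hp
  have hcP : cOf n CC ∣ ((X : Polynomial F) ^ n - C 1) :=
    Dvd.intro_left _ (gOf_mul_cOf hn CC)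
  refine ⟨hmon, hirr, hdvdc.trans hcP, ?_⟩
  rintro rfl
  have h2 : (X - 1 : Polynomial F) * (X - 1) ∣ ((X : Polynomial F) ^ n - C 1) := by
    rw [← gOf_mul_cOf hn CC]
    exact mul_dvd_mul (X_sub_one_dvd_gOf CC hsub) hdvdc
  have := hsq _ h2
  simp only [← C_1] at this
  exact Polynomial.not_isUnit_X_sub_C 1 this

lemma prod_factors_cOf {n : ℕ} (hn : 0 < n) (CC : Submodule (Polynomial F) (QA F n 1)) :
    (normalizedFactors (cOf n CC)).prod = cOf n CC := by
  have hc0 : cOf n CC ≠ 0 := (cOf_monic hn CC).ne_zero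
  have hmon : ∀ p ∈ normalizedFactors (cOf n CC), p.Monic := by
    intro p hp
    have hp0 : p ≠ 0 := fun h => (h ▸ zero_notMem_normalizedFactors _) hp
    have := normalize_normalized_factor p hp
    rw [← this]; exact monic_normalize hp0
  have hpm : ((normalizedFactors (cOf n CC)).map id).prod.Monic :=
    monic_multiset_prod_of_monic _ id (fun p hp => hmon p hp)
  rw [Multiset.map_id] at hpm
  exact eq_of_monic_of_associated hpm (cOf_monic hn CC) (prod_normalizedFactors hc0)

lemma sum_natDegree_factors_cOf {n : ℕ} (hn : 0 < n)
    (CC : Submodule (Polynomial F) (QA F n 1)) :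
    ((normalizedFactors (cOf n CC)).map natDegree).sum = (cOf n CC).natDegree := by
  conv_rhs => rw [← prod_factors_cOf hn CC]
  rw [natDegree_multiset_prod]
  exact fun h => (zero_notMem_normalizedFactors _) h

lemma monic_of_mem_nf {f p : Polynomial F} (hp : p ∈ normalizedFactors f) : p.Monic := by
  have hp0 : p ≠ 0 := fun h => (h ▸ zero_notMem_normalizedFactors _) hp
  have hnorm := normalize_normalized_factor p hp
  rw [← hnorm]; exact monic_normalize hp0

lemma prod_nf_monic {f : Polynomial F} (hf : f.Monic) : (normalizedFactors f).prod = f := by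
  have hpm : ((normalizedFactors f).map id).prod.Monic :=
    monic_multiset_prod_of_monic _ id (fun p hp => monic_of_mem_nf hp)
  rw [Multiset.map_id] at hpm
  exact eq_of_monic_of_associated hpm hf (prod_normalizedFactors hf.ne_zero)

lemma sum_natDegree_nf {f : Polynomial F} (hf : f.Monic) :
    ((normalizedFactors f).map natDegree).sum = f.natDegree := by
  conv_rhs => rw [← prod_nf_monic hf]
  rw [natDegree_multiset_prod]
  exact fun h => (zero_notMem_normalizedFactors _) h

lemma card_nf_le {f : Polynomial F} (hf : f.Monic) :
    Multiset.card (normalizedFactors f) ≤ f.natDegree := by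
  have h := Multiset.card_nsmul_le_sum (s := (normalizedFactors f).map natDegree) (a := 1)
    (fun x hx => by
      obtain ⟨p, hp, rfl⟩ := Multiset.mem_map.mp hx
      exact (irreducible_of_normalized_factor p hp).natDegree_pos)
  rw [sum_natDegree_nf hf, Multiset.card_map, smul_eq_mul, mul_one] at h
  exact h

lemma filter_padded (M : Multiset (Polynomial F)) (k : ℕ) (h1 : ∀ x ∈ M, x ≠ 1) :
    Multiset.filter (fun p => p ≠ (1 : Polynomial F)) ↑(M.toList ++ List.replicate k (1 : Polynomial F)) = M := by
  classical
  rw [← Multiset.coe_add, Multiset.filter_add, Multiset.coe_toList, Multiset.coe_replicate]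
  rw [Multiset.filter_eq_self.mpr h1]
  have h2 : Multiset.filter (fun p => p ≠ (1 : Polynomial F)) (Multiset.replicate k 1) = 0 := by
    rw [Multiset.filter_eq_nil]
    intro a ha
    simp [Multiset.eq_of_mem_replicate ha]
  rw [h2, add_zero]

end Helpers

/-- For every integer `d` with `μ(n) ≤ d ≤ n − 1`, the number of
`F[X]`-submodules of `𝓘` of `F`-dimension `d` is at most `n^{d/μ(n)}`. -/
theorem stmt11 {F : Type*} [Field F] [Fintype F]
    (q : ℕ) (hq : q = Fintype.card F)
    (n : ℕ) (hn : 0 < n) (hnq : Nat.gcd n q = 1)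
    (d : ℕ) (hd1 : mun F n ≤ d) (hd2 : d ≤ n - 1) :
    (Nat.card {CC : Submodule (Polynomial F) (QA F n 1) //
        (CC : Set (QA F n 1)) ⊆ (Jcyc F n : Set (QA F n 1)) ∧
        Module.finrank F CC = d} : ℝ)
      ≤ (n : ℝ) ^ ((d : ℝ) / (mun F n : ℝ)) := by
  classical
  by_cases hn1 : n = 1
  · subst hn1
    rw [Nat.cast_one, Real.one_rpow]
    have hbot : Jcyc F 1 = ⊥ := by
      rw [Jcyc]
      have h0 : Ideal.Quotient.mk (Ideal.span {(X : Polynomial F) ^ 1 - C 1}) (X - 1) = 0 := by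
        rw [Ideal.Quotient.eq_zero_iff_mem, pow_one, C_1]
        exact Ideal.subset_span rfl
      rw [h0, Ideal.span_singleton_eq_bot.mpr rfl]
    haveI : Subsingleton {CC : Submodule (Polynomial F) (QA F 1 1) //
        (CC : Set (QA F 1 1)) ⊆ (Jcyc F 1 : Set (QA F 1 1)) ∧
        Module.finrank F CC = d} := by
      constructor
      rintro ⟨C1, h1, -⟩ ⟨C2, h2, -⟩
      rw [hbot] at h1 h2
      have e1 : C1 = ⊥ := by
        rw [eq_bot_iff]; intro x hx
        simpa using h1 hx
      have e2 : C2 = ⊥ := by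
        rw [eq_bot_iff]; intro x hx
        simpa using h2 hx
      simp [e1, e2]
    have h1 : Nat.card {CC : Submodule (Polynomial F) (QA F 1 1) //
        (CC : Set (QA F 1 1)) ⊆ (Jcyc F 1 : Set (QA F 1 1)) ∧
        Module.finrank F CC = d} ≤ 1 := by
      rcases isEmpty_or_nonempty {CC : Submodule (Polynomial F) (QA F 1 1) //
        (CC : Set (QA F 1 1)) ⊆ (Jcyc F 1 : Set (QA F 1 1)) ∧
        Module.finrank F CC = d} with he | hne
      · rw [Nat.card_of_isEmpty]; omega
      · rw [Nat.card_unique]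
    exact_mod_cast h1
  -- main case : n ≥ 2
  have hn2 : 2 ≤ n := by omega
  -- the characteristic does not divide n
  have hnF : (n : F) ≠ 0 := by
    intro h
    haveI := ringChar.charP F
    obtain ⟨k, hp, hcard⟩ := FiniteField.card F (ringChar F)
    have hdvdn : ringChar F ∣ n := (CharP.cast_eq_zero_iff F (ringChar F) n).mp h
    have hdvdq : ringChar F ∣ q := by
      rw [hq, hcard]
      exact dvd_pow_self _ k.pos.ne'
    have hd := Nat.dvd_gcd hdvdn hdvdq
    rw [hnq, Nat.dvd_one] at hd
    exact hp.one_lt.ne' hd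
  have hsep : ((X : Polynomial F) ^ n - 1).Separable :=
    (Polynomial.X_pow_sub_one_separable_iff).mpr hnF
  have hsq : Squarefree ((X : Polynomial F) ^ n - C 1) := by
    rw [C_1]; exact hsep.squarefree
  -- facts about P
  have hPm : ((X : Polynomial F) ^ n - C 1).Monic := monic_X_pow_sub_C 1 hn.ne'
  have hP0 : ((X : Polynomial F) ^ n - C 1) ≠ 0 := hPm.ne_zero
  have hPdeg : ((X : Polynomial F) ^ n - C 1).natDegree = n := natDegree_X_pow_sub_C
  have hX1P : (X - 1 : Polynomial F) ∣ ((X : Polynomial F) ^ n - C 1) := by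
    simpa using sub_dvd_pow_sub_pow (X : Polynomial F) 1 n
  have hX1m : (X - 1 : Polynomial F).Monic := by
    rw [← C_1]; exact monic_X_sub_C 1
  have hX1irr : Irreducible (X - 1 : Polynomial F) := by
    rw [← C_1]; exact Polynomial.irreducible_X_sub_C 1
  -- μ facts
  have hsetne : {e : ℕ | ∃ g : Polynomial F, g.Monic ∧ Irreducible g ∧
      g ∣ ((X : Polynomial F) ^ n - 1) ∧ g ≠ X - 1 ∧ g.natDegree = e}.Nonempty := by
    obtain ⟨b, hb⟩ := hX1P
    have hb0 : b ≠ 0 := by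
      rintro rfl; rw [mul_zero] at hb; exact hP0 hb
    have hbdeg : b.natDegree = n - 1 := by
      have := natDegree_mul (p := (X - 1 : Polynomial F)) (q := b) hX1m.ne_zero hb0
      rw [← hb, hPdeg] at this
      have hdX : (X - 1 : Polynomial F).natDegree = 1 := by
        rw [← C_1]; exact natDegree_X_sub_C 1
      omega
    have hbu : ¬IsUnit b := by
      intro hu
      have := natDegree_eq_zero_of_isUnit hu
      omega
    obtain ⟨g₁, hg₁m, hg₁irr, hg₁dvd⟩ := Polynomial.exists_monic_irreducible_factor b hbu
    have hg₁P : g₁ ∣ ((X : Polynomial F) ^ n - C 1) := hg₁dvd.trans ⟨X - 1, by rw [hb]; ring⟩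
    have hg₁ne : g₁ ≠ X - 1 := by
      rintro rfl
      have h2 : (X - 1 : Polynomial F) * (X - 1) ∣ ((X : Polynomial F) ^ n - C 1) := by
        rw [hb]; exact mul_dvd_mul_left _ hg₁dvd
      exact (by rw [← C_1]; exact Polynomial.not_isUnit_X_sub_C 1 : ¬IsUnit (X - 1 : Polynomial F))
        (hsq _ h2)
    exact ⟨g₁.natDegree, g₁, hg₁m, hg₁irr, by rwa [← C_1 (R := F)], hg₁ne, rfl⟩
  have hμmem := Nat.sInf_mem hsetne
  have hμpos : 0 < mun F n := by
    obtain ⟨g₂, -, h2irr, -, -, h2deg⟩ := hμmem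
    rw [mun, ← h2deg]
    exact h2irr.natDegree_pos
  have hμle : ∀ p : Polynomial F, p.Monic → Irreducible p →
      p ∣ ((X : Polynomial F) ^ n - C 1) → p ≠ X - 1 → mun F n ≤ p.natDegree := by
    intro p h1 h2 h3 h4
    exact Nat.sInf_le ⟨p, h1, h2, by rwa [← C_1 (R := F)], h4, rfl⟩
  set μ := mun F n with hμdef
  set K := d / μ with hKdef
  set S : Finset (Polynomial F) :=
    insert (1 : Polynomial F)
      (((normalizedFactors ((X : Polynomial F) ^ n - C 1)).toFinset).erase (X - 1)) with hSdef
  have hX1mem : (X - 1 : Polynomial F)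
      ∈ (normalizedFactors ((X : Polynomial F) ^ n - C 1)).toFinset := by
    obtain ⟨qq, hq1, hq2⟩ := exists_mem_normalizedFactors_of_dvd hP0 hX1irr hX1P
    have heq : (X - 1 : Polynomial F) = qq :=
      eq_of_monic_of_associated hX1m (monic_of_mem_nf hq1) hq2
    rw [Multiset.mem_toFinset, heq]; exact hq1
  have hScard : S.card ≤ n := by
    have h2 := (Multiset.toFinset_card_le
      (normalizedFactors ((X : Polynomial F) ^ n - C 1))).trans (card_nf_le hPm)
    rw [hPdeg] at h2
    have hle1 : ((normalizedFactors ((X : Polynomial F) ^ n - C 1)).toFinset.erase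
        (X - 1)).card ≤ n - 1 := by
      rw [Finset.card_erase_of_mem hX1mem]
      omega
    calc S.card ≤ _ + 1 := Finset.card_insert_le _ _
      _ ≤ n := by omega
  set A := {CC : Submodule (Polynomial F) (QA F n 1) //
      (CC : Set (QA F n 1)) ⊆ (Jcyc F n : Set (QA F n 1)) ∧
      Module.finrank F CC = d} with hA
  have main : Nat.card A ≤ S.card ^ K := by
    let L : A → List (Polynomial F) := fun x =>
      (normalizedFactors (cOf n x.1)).toList ++
        List.replicate (K - (normalizedFactors (cOf n x.1)).toList.length) 1
    have hcardM : ∀ x : A, Multiset.card (normalizedFactors (cOf n x.1)) ≤ K := by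
      intro x
      have hsum : ((normalizedFactors (cOf n x.1)).map natDegree).sum = d := by
        rw [sum_natDegree_nf (cOf_monic hn x.1), natDegree_cOf hn x.1 x.2.2]
      have hb := Multiset.card_nsmul_le_sum
        (s := (normalizedFactors (cOf n x.1)).map natDegree) (a := μ)
        (fun e he => by
          obtain ⟨p, hp, rfl⟩ := Multiset.mem_map.mp he
          obtain ⟨hm, hi, hdvd, hne⟩ := factors_cOf hn hsq x.1 x.2.1 p hp
          exact hμle p hm hi hdvd hne)
      rw [hsum, Multiset.card_map, smul_eq_mul] at hb
      rw [hKdef]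
      exact (Nat.le_div_iff_mul_le hμpos).mpr hb
    have hlen : ∀ x : A, (L x).length = K := by
      intro x
      have := hcardM x
      simp only [L, List.length_append, List.length_replicate, Multiset.length_toList]
      omega
    have hmemL : ∀ x : A, ∀ a ∈ L x, a ∈ S := by
      intro x a ha
      rcases List.mem_append.mp ha with h | h
      · have haM : a ∈ normalizedFactors (cOf n x.1) := by
          rwa [← Multiset.mem_coe, Multiset.coe_toList] at h
        obtain ⟨hm, hi, hdvd, hne⟩ := factors_cOf hn hsq x.1 x.2.1 a haM
        have hcdvd : cOf n x.1 ∣ ((X : Polynomial F) ^ n - C 1) :=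
          Dvd.intro_left _ (gOf_mul_cOf hn x.1)
        have hc0 : cOf n x.1 ≠ 0 := (cOf_monic hn x.1).ne_zero
        have hle := (dvd_iff_normalizedFactors_le_normalizedFactors hc0 hP0).mp hcdvd
        have haP : a ∈ normalizedFactors ((X : Polynomial F) ^ n - C 1) :=
          Multiset.mem_of_le hle haM
        exact Finset.mem_insert_of_mem
          (Finset.mem_erase.mpr ⟨hne, Multiset.mem_toFinset.mpr haP⟩)
      · rw [List.eq_of_mem_replicate h]
        exact Finset.mem_insert_self _ _
    let Φ : A → {f : Fin K → Polynomial F // ∀ i, f i ∈ S} := fun x =>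
      ⟨fun i => (L x).getD i 1, fun i => by
        show (L x).getD i 1 ∈ S
        rw [List.getD_eq_getElem (L x) 1 (by rw [hlen x]; exact i.isLt)]
        exact hmemL x _ (List.getElem_mem _)⟩
    have hinj : Function.Injective Φ := by
      intro x y hxy
      have hfun : (fun i : Fin K => (L x).getD i 1) = fun i : Fin K => (L y).getD i 1 :=
        congrArg Subtype.val hxy
      have hLeq : L x = L y := by
        apply List.ext_getElem (by rw [hlen x, hlen y])
        intro i hix hiy
        have hiK : i < K := by rw [← hlen x]; exact hix
        have hget := congrFun hfun ⟨i, hiK⟩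
        simp only at hget
        rwa [List.getD_eq_getElem (L x) 1 hix, List.getD_eq_getElem (L y) 1 hiy] at hget
      have hne1 : ∀ z : A, ∀ p ∈ normalizedFactors (cOf n z.1), p ≠ (1 : Polynomial F) := by
        intro z p hp hp1
        exact (irreducible_of_normalized_factor p hp).not_isUnit (hp1 ▸ isUnit_one)
      have hMf := congrArg (fun l : List (Polynomial F) =>
        Multiset.filter (fun p => p ≠ (1 : Polynomial F)) ↑l) hLeq
      simp only [L] at hMf
      rw [filter_padded _ _ (hne1 x), filter_padded _ _ (hne1 y)] at hMf
      have hceq : cOf n x.1 = cOf n y.1 := by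
        rw [← prod_nf_monic (cOf_monic hn x.1), ← prod_nf_monic (cOf_monic hn y.1), hMf]
      exact Subtype.ext (CC_eq_of_cOf_eq hn hceq)
    haveI : Finite {f : Fin K → Polynomial F // ∀ i, f i ∈ S} :=
      Finite.of_equiv _ (Equiv.subtypePiEquivPi
        (p := fun (_ : Fin K) (b : Polynomial F) => b ∈ S)).symm
    have h1 := Nat.card_le_card_of_injective Φ hinj
    have h2 : Nat.card {f : Fin K → Polynomial F // ∀ i, f i ∈ S} = S.card ^ K := by
      rw [Nat.card_congr (Equiv.subtypePiEquivPi
        (p := fun (_ : Fin K) (b : Polynomial F) => b ∈ S)),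
        Nat.card_eq_fintype_card, Fintype.card_pi]
      simp
    exact le_trans h1 (le_of_eq h2)
  have hfinal : Nat.card A ≤ n ^ K := main.trans (Nat.pow_le_pow_left hScard K)
  have hKμ : (K : ℝ) ≤ (d : ℝ) / (μ : ℝ) := by
    rw [le_div_iff₀ (by exact_mod_cast hμpos)]
    exact_mod_cast Nat.div_mul_le_self d μ
  calc (Nat.card A : ℝ) ≤ ((n ^ K : ℕ) : ℝ) := by exact_mod_cast hfinal
    _ = (n : ℝ) ^ (K : ℝ) := by rw [Real.rpow_natCast]; push_cast; ring
    _ ≤ (n : ℝ) ^ ((d : ℝ) / (μ : ℝ)) :=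
      Real.rpow_le_rpow_of_exponent_le (by exact_mod_cast hn) hKμ
end

section
/- The assignment Σ_{j=0}^{αn−1} ā_j X^j ↦ Σ_{j=0}^{αn−1} a_j π^{ℓ−1} X^j (where a_j ∈ R is any lift of ā_j ∈ F) gives a well-defined injective map η_α : F[X]/⟨X^{αn} − λ̄⟩ → R[X]/⟨X^{αn} − λ⟩ that is additive, satisfies η_α(ḡ·f) = g·η_α(f) for every g ∈ R[X] (where ḡ ∈ F[X] is the coefficientwise reduction of g modulo Rπ), and preserves Hamming weight: the degree-< αn coefficient vector of η_α(f) has exactly as many nonzero entries as that of f. Equivalently, the kernel of the map F[X] → R[X]/⟨X^{αn} − λ⟩ sending Σ ā_j X^j to the class of Σ a_j π^{ℓ−1} X^j is exactly the ideal ⟨X^{αn} − λ̄⟩ of F[X]. -/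
open Polynomial

/-- The canonical representative (of degree `< deg g` when `g` is monic) of a class in
`R[X]/⟨g⟩`. -/
noncomputable def polyRep {R : Type*} [CommRing R] (g : Polynomial R)
    (c : Polynomial R ⧸ Ideal.span {g}) : Polynomial R :=
  Function.surjInv Ideal.Quotient.mk_surjective c %ₘ g

/-- The Hamming weight of a class in `R[X]/⟨g⟩`: the number of nonzero coefficients of its
canonical representative of degree `< deg g` (`g` monic). -/
noncomputable def qwt {R : Type*} [CommRing R] (g : Polynomial R)
    (c : Polynomial R ⧸ Ideal.span {g}) : ℕ :=
  (polyRep g c).support.card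

private lemma ann_iff {R : Type*} [CommRing R]
    (hchain : ∀ I J : Ideal R, I ≤ J ∨ J ≤ I)
    {π : R} (hmax : (Ideal.span {π}).IsMaximal)
    {ℓ : ℕ} (hℓ : 0 < ℓ) (hπℓ : π ^ ℓ = 0) (hπℓ1 : π ^ (ℓ - 1) ≠ 0)
    (a : R) : π ^ (ℓ - 1) * a = 0 ↔ a ∈ Ideal.span {π} := by
  constructor
  · intro h
    by_contra hna
    rcases hchain (Ideal.span {a}) (Ideal.span {π}) with hle | hle
    · exact hna (hle (Ideal.subset_span rfl))
    · have htop : Ideal.span {a} = ⊤ := by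
        by_contra hne
        have := hmax.eq_of_le hne hle
        exact hna (this ▸ Ideal.subset_span rfl)
      have hu : IsUnit a := Ideal.span_singleton_eq_top.mp htop
      exact hπℓ1 ((IsUnit.mul_left_eq_zero hu).mp h)
  · intro h
    obtain ⟨c, rfl⟩ := Ideal.mem_span_singleton.mp h
    calc π ^ (ℓ - 1) * (π * c) = π ^ ℓ * c := by
          rw [← mul_assoc, ← pow_succ, Nat.sub_add_cancel hℓ]
      _ = 0 := by rw [hπℓ, zero_mul]

private lemma mk_modByMonic {R : Type*} [CommRing R] {f : Polynomial R} (hf : f.Monic)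
    (q : Polynomial R) :
    Ideal.Quotient.mk (Ideal.span {f}) (q %ₘ f) = Ideal.Quotient.mk (Ideal.span {f}) q := by
  rw [Ideal.Quotient.eq, Ideal.mem_span_singleton]
  exact ⟨-(q /ₘ f), by linear_combination Polynomial.modByMonic_add_div q f⟩

private lemma modByMonic_congr {R : Type*} [CommRing R] {f q1 q2 : Polynomial R} (hf : f.Monic)
    (h : Ideal.Quotient.mk (Ideal.span {f}) q1 = Ideal.Quotient.mk (Ideal.span {f}) q2) :
    q1 %ₘ f = q2 %ₘ f := by
  have hd : f ∣ q1 - q2 := Ideal.mem_span_singleton.mp (Ideal.Quotient.eq.mp h)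
  have h0 : (q1 - q2) %ₘ f = 0 := (Polynomial.modByMonic_eq_zero_iff_dvd hf).mpr hd
  calc q1 %ₘ f = (q2 + (q1 - q2)) %ₘ f := by ring_nf
    _ = q2 %ₘ f + (q1 - q2) %ₘ f := Polynomial.add_modByMonic _ _
    _ = q2 %ₘ f := by rw [h0, add_zero]

private lemma polyRep_mk' {R : Type*} [CommRing R] {f : Polynomial R} (hf : f.Monic)
    (q : Polynomial R) :
    polyRep f (Ideal.Quotient.mk (Ideal.span {f}) q) = q %ₘ f :=
  modByMonic_congr hf (Function.surjInv_eq Ideal.Quotient.mk_surjective _)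

/-- The assignment `Σ ā_j X^j ↦ Σ a_j π^{ℓ−1} X^j` (where `a_j ∈ R` is any
lift of `ā_j ∈ F`) gives a well-defined injective map
`η_α : F[X]/⟨X^{αn} − λ̄⟩ → R[X]/⟨X^{αn} − λ⟩` that is additive, satisfies
`η_α(ḡ·f) = g·η_α(f)` for every `g ∈ R[X]`, and preserves Hamming weight.  Equivalently,
the kernel of the map `F[X] → R[X]/⟨X^{αn} − λ⟩` sending `Σ ā_j X^j` to the class of
`Σ a_j π^{ℓ−1} X^j` is exactly the ideal `⟨X^{αn} − λ̄⟩` of `F[X]`. -/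
theorem stmt16 {R : Type*} [CommRing R] [Finite R]
    (hchain : ∀ I J : Ideal R, I ≤ J ∨ J ≤ I)
    (π : R) (hmax : (Ideal.span {π}).IsMaximal)
    (ℓ : ℕ) (hℓ : 0 < ℓ) (hπℓ : π ^ ℓ = 0) (hπℓ1 : π ^ (ℓ - 1) ≠ 0)
    (lam : R) (hlam : IsUnit lam)
    (n α : ℕ) (hn : 0 < n) (hα : 0 < α) :
    (∃ η : (Polynomial (R ⧸ Ideal.span {π}) ⧸
            Ideal.span {(X : Polynomial (R ⧸ Ideal.span {π})) ^ (α * n)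
              - C (Ideal.Quotient.mk (Ideal.span {π}) lam)}) →
          (Polynomial R ⧸ Ideal.span {(X : Polynomial R) ^ (α * n) - C lam}),
      (∀ g : Polynomial R,
        η (Ideal.Quotient.mk _ (g.map (Ideal.Quotient.mk (Ideal.span {π})))) =
          Ideal.Quotient.mk _ (C (π ^ (ℓ - 1)) * g)) ∧
      Function.Injective η ∧
      (∀ x y, η (x + y) = η x + η y) ∧
      (∀ (g : Polynomial R) (x : Polynomial (R ⧸ Ideal.span {π}) ⧸
            Ideal.span {(X : Polynomial (R ⧸ Ideal.span {π})) ^ (α * n)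
              - C (Ideal.Quotient.mk (Ideal.span {π}) lam)}),
        η (Ideal.Quotient.mk _ (g.map (Ideal.Quotient.mk (Ideal.span {π}))) * x) =
          Ideal.Quotient.mk _ g * η x) ∧
      (∀ x, qwt ((X : Polynomial (R ⧸ Ideal.span {π})) ^ (α * n)
              - C (Ideal.Quotient.mk (Ideal.span {π}) lam)) x =
            qwt ((X : Polynomial R) ^ (α * n) - C lam) (η x))) ∧
    (∀ g : Polynomial R,
      Ideal.Quotient.mk (Ideal.span {(X : Polynomial R) ^ (α * n) - C lam})
          (C (π ^ (ℓ - 1)) * g) = 0 ↔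
        g.map (Ideal.Quotient.mk (Ideal.span {π})) ∈
          Ideal.span {(X : Polynomial (R ⧸ Ideal.span {π})) ^ (α * n)
            - C (Ideal.Quotient.mk (Ideal.span {π}) lam)}) := by
  have hR : Nontrivial R := nontrivial_of_ne _ _ hπℓ1
  set φ := Ideal.Quotient.mk (Ideal.span {π}) with hφ
  set F := R ⧸ Ideal.span {π}
  have hF : Nontrivial F := Ideal.Quotient.nontrivial_iff.mpr hmax.ne_top
  have hαn : α * n ≠ 0 := Nat.mul_ne_zero hα.ne' hn.ne'
  set f : Polynomial R := X ^ (α * n) - C lam with hfdef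
  set fb : Polynomial F := X ^ (α * n) - C (φ lam) with hfbdef
  have hf : f.Monic := monic_X_pow_sub_C _ hαn
  have hfb : fb.Monic := monic_X_pow_sub_C _ hαn
  have hmapf : f.map φ = fb := by simp [hfdef, hfbdef]
  -- the key annihilator fact
  have hann : ∀ a : R, π ^ (ℓ - 1) * a = 0 ↔ φ a = 0 := by
    intro a
    rw [ann_iff hchain hmax hℓ hπℓ hπℓ1, hφ, Ideal.Quotient.eq_zero_iff_mem]
  -- a polynomial with coefficients mapping to zero
  have hCzero : ∀ r : Polynomial R, C (π ^ (ℓ - 1)) * r = 0 ↔ r.map φ = 0 := by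
    intro r
    constructor
    · intro h
      ext j
      have := congrArg (fun p => Polynomial.coeff p j) h
      simp only [coeff_C_mul, coeff_zero] at this
      simpa [coeff_map] using (hann (r.coeff j)).mp this
    · intro h
      ext j
      have : φ (r.coeff j) = 0 := by
        have := congrArg (fun p => Polynomial.coeff p j) h
        simpa [coeff_map] using this
      rw [coeff_C_mul, coeff_zero]
      exact (hann (r.coeff j)).mpr this
  -- the kernel statement
  have ker : ∀ g : Polynomial R,
      Ideal.Quotient.mk (Ideal.span {f}) (C (π ^ (ℓ - 1)) * g) = 0 ↔
        g.map φ ∈ Ideal.span {fb} := by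
    intro g
    rw [Ideal.Quotient.eq_zero_iff_mem, Ideal.mem_span_singleton, Ideal.mem_span_singleton]
    constructor
    · intro hd
      have hr0 : C (π ^ (ℓ - 1)) * (g %ₘ f) = 0 := by
        have hd2 : f ∣ C (π ^ (ℓ - 1)) * (g %ₘ f) := by
          have heq : C (π ^ (ℓ - 1)) * (g %ₘ f)
              = C (π ^ (ℓ - 1)) * g - f * (C (π ^ (ℓ - 1)) * (g /ₘ f)) := by
            linear_combination C (π ^ (ℓ - 1)) * (Polynomial.modByMonic_add_div g f)
          rw [heq]
          exact dvd_sub hd (Dvd.intro _ rfl)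
        have hm0 : (C (π ^ (ℓ - 1)) * (g %ₘ f)) %ₘ f = 0 :=
          (Polynomial.modByMonic_eq_zero_iff_dvd hf).mpr hd2
        have hdeg : (C (π ^ (ℓ - 1)) * (g %ₘ f)).degree < f.degree := by
          calc (C (π ^ (ℓ - 1)) * (g %ₘ f)).degree
              ≤ (C (π ^ (ℓ - 1))).degree + (g %ₘ f).degree := degree_mul_le _ _
            _ ≤ 0 + (g %ₘ f).degree := add_le_add_left (degree_C_le) _
            _ = (g %ₘ f).degree := zero_add _
            _ < f.degree := Polynomial.degree_modByMonic_lt _ hf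
        rw [← hm0]
        exact ((Polynomial.modByMonic_eq_self_iff hf).mpr hdeg).symm
      have : (g %ₘ f).map φ = 0 := (hCzero _).mp hr0
      have h2 : (g.map φ) %ₘ fb = 0 := by
        rw [← hmapf, ← Polynomial.map_modByMonic _ hf, this]
      exact (Polynomial.modByMonic_eq_zero_iff_dvd hfb).mp h2
    · intro hd
      have h2 : (g %ₘ f).map φ = 0 := by
        rw [Polynomial.map_modByMonic _ hf, hmapf]
        exact (Polynomial.modByMonic_eq_zero_iff_dvd hfb).mpr hd
      have hr0 : C (π ^ (ℓ - 1)) * (g %ₘ f) = 0 := (hCzero _).mpr h2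
      have heq : C (π ^ (ℓ - 1)) * g
          = f * (C (π ^ (ℓ - 1)) * (g /ₘ f)) + C (π ^ (ℓ - 1)) * (g %ₘ f) := by
        linear_combination C (π ^ (ℓ - 1)) * (Polynomial.modByMonic_add_div g f).symm
      rw [heq, hr0, add_zero]
      exact Dvd.intro _ rfl
  -- the surjection θ : R[X] → F[X]/(fb)
  set θ : Polynomial R →+* (Polynomial F ⧸ Ideal.span {fb}) :=
    (Ideal.Quotient.mk (Ideal.span {fb})).comp (mapRingHom φ) with hθdef
  have hθsurj : Function.Surjective θ :=
    Ideal.Quotient.mk_surjective.comp (Polynomial.map_surjective φ Ideal.Quotient.mk_surjective)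
  have hθg : ∀ g : Polynomial R, θ g = Ideal.Quotient.mk (Ideal.span {fb}) (g.map φ) := fun g => rfl
  -- key: θ g = θ g' → images agree
  have hker2 : ∀ g g' : Polynomial R, θ g = θ g' →
      Ideal.Quotient.mk (Ideal.span {f}) (C (π ^ (ℓ - 1)) * g) =
      Ideal.Quotient.mk (Ideal.span {f}) (C (π ^ (ℓ - 1)) * g') := by
    intro g g' h
    have hmem : (g - g').map φ ∈ Ideal.span {fb} := by
      rw [Polynomial.map_sub]
      rw [hθg, hθg] at h
      exact Ideal.Quotient.eq.mp h
    have := (ker (g - g')).mpr hmem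
    rw [Ideal.Quotient.eq_zero_iff_mem] at this
    rw [Ideal.Quotient.eq]
    have heq : C (π ^ (ℓ - 1)) * g - C (π ^ (ℓ - 1)) * g' = C (π ^ (ℓ - 1)) * (g - g') := by ring
    rwa [heq]
  set η : (Polynomial F ⧸ Ideal.span {fb}) → (Polynomial R ⧸ Ideal.span {f}) :=
    fun x => Ideal.Quotient.mk (Ideal.span {f})
      (C (π ^ (ℓ - 1)) * Function.surjInv hθsurj x) with hηdef
  have hη : ∀ g : Polynomial R, η (θ g) =
      Ideal.Quotient.mk (Ideal.span {f}) (C (π ^ (ℓ - 1)) * g) := by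
    intro g
    exact hker2 _ _ (Function.surjInv_eq hθsurj (θ g))
  have hηmk : ∀ g : Polynomial R,
      η (Ideal.Quotient.mk (Ideal.span {fb}) (g.map φ)) =
      Ideal.Quotient.mk (Ideal.span {f}) (C (π ^ (ℓ - 1)) * g) := by
    intro g; rw [← hθg]; exact hη g
  constructor
  · refine ⟨η, hηmk, ?_, ?_, ?_, ?_⟩
    · -- injectivity
      intro x y hxy
      obtain ⟨g, rfl⟩ := hθsurj x
      obtain ⟨g', rfl⟩ := hθsurj y
      rw [hη, hη] at hxy
      have : Ideal.Quotient.mk (Ideal.span {f}) (C (π ^ (ℓ - 1)) * (g - g')) = 0 := by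
        have heq : C (π ^ (ℓ - 1)) * (g - g')
            = C (π ^ (ℓ - 1)) * g - C (π ^ (ℓ - 1)) * g' := by ring
        rw [heq, map_sub, hxy, sub_self]
      have hmem := (ker _).mp this
      rw [Polynomial.map_sub] at hmem
      rw [hθg, hθg, Ideal.Quotient.eq]
      exact hmem
    · -- additivity
      intro x y
      obtain ⟨g, rfl⟩ := hθsurj x
      obtain ⟨g', rfl⟩ := hθsurj y
      rw [← map_add, hη, hη, hη]
      rw [← map_add, mul_add]
    · -- scalar multiplication
      intro g x
      obtain ⟨h, rfl⟩ := hθsurj x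
      have : Ideal.Quotient.mk (Ideal.span {fb}) (g.map φ) * θ h = θ (g * h) := by
        rw [hθg, map_mul]; rfl
      rw [this, hη, hη, ← map_mul]
      congr 1
      ring
    · -- weight preservation
      intro x
      obtain ⟨q, hq⟩ := Polynomial.map_surjective φ Ideal.Quotient.mk_surjective
        (polyRep fb x)
      set g : Polynomial R := q %ₘ f with hgdef
      have hdegp : (polyRep fb x).degree < fb.degree := by
        unfold polyRep
        exact Polynomial.degree_modByMonic_lt _ hfb
      have hmapg : g.map φ = polyRep fb x := by
        rw [hgdef, Polynomial.map_modByMonic _ hf, hmapf, hq]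
        exact (Polynomial.modByMonic_eq_self_iff hfb).mpr hdegp
      have hmkx : Ideal.Quotient.mk (Ideal.span {fb}) (polyRep fb x) = x := by
        unfold polyRep
        rw [mk_modByMonic hfb]
        exact Function.surjInv_eq Ideal.Quotient.mk_surjective x
      have hx : x = Ideal.Quotient.mk (Ideal.span {fb}) (g.map φ) := by
        rw [hmapg, hmkx]
      -- compute η x
      have hηx : η x = Ideal.Quotient.mk (Ideal.span {f}) (C (π ^ (ℓ - 1)) * g) := by
        rw [hx]; exact hηmk g
      have hdegg : (C (π ^ (ℓ - 1)) * g).degree < f.degree := by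
        calc (C (π ^ (ℓ - 1)) * g).degree
            ≤ (C (π ^ (ℓ - 1))).degree + g.degree := degree_mul_le _ _
          _ ≤ 0 + g.degree := add_le_add_left (degree_C_le) _
          _ = g.degree := zero_add _
          _ < f.degree := Polynomial.degree_modByMonic_lt _ hf
      have hrep : polyRep f (η x) = C (π ^ (ℓ - 1)) * g := by
        rw [hηx, polyRep_mk' hf]
        exact (Polynomial.modByMonic_eq_self_iff hf).mpr hdegg
      unfold qwt
      rw [hrep]
      congr 1
      ext j
      simp only [mem_support_iff, coeff_C_mul]
      rw [not_iff_not.symm, not_not, not_not, hann, ← coeff_map, hmapg]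
  · -- the kernel statement
    exact ker
end

section
/- A finite commutative ring R with 1 ≠ 0 is a chain ring — that is, its ideals are totally ordered by inclusion — if and only if there exists a nilpotent element π ∈ R such that the quotient R/Rπ is a field. -/
/-- A finite commutative ring `R` with `1 ≠ 0` is a chain ring — that is,
its ideals are totally ordered by inclusion — if and only if there exists a nilpotent element
`π ∈ R` such that the quotient `R/Rπ` is a field. -/
theorem stmt19 {R : Type*} [CommRing R] [Finite R] [Nontrivial R] :
    (∀ I J : Ideal R, I ≤ J ∨ J ≤ I) ↔
      ∃ π : R, IsNilpotent π ∧ IsField (R ⧸ Ideal.span {π}) := by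
  constructor
  · intro h
    obtain ⟨m, hm⟩ := Ideal.exists_maximal R
    -- the set of principal ideals generated by elements of m
    have hS : ((fun x : R => Ideal.span {x}) '' (m : Set R)).Finite := Set.toFinite _
    have hne : ((fun x : R => Ideal.span {x}) '' (m : Set R)).Nonempty :=
      ⟨_, ⟨0, m.zero_mem, rfl⟩⟩
    obtain ⟨I, hI, hImax⟩ := Set.Finite.exists_maximalFor id _ hS hne
    obtain ⟨π, hπm, rfl⟩ := hI
    -- m = span {π}
    have hle : m ≤ Ideal.span {π} := by
      intro x hx
      rcases h (Ideal.span {x}) (Ideal.span {π}) with h1 | h2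
      · exact h1 (Ideal.mem_span_singleton_self x)
      · have : id (Ideal.span {π}) = id (Ideal.span {x}) := le_antisymm h2 (hImax ⟨x, hx, rfl⟩ h2)
        simp only [id] at this
        rw [this]
        exact Ideal.mem_span_singleton_self x
    have heq : Ideal.span {π} = m :=
      le_antisymm (Ideal.span_le.mpr (Set.singleton_subset_iff.mpr hπm)) hle
    -- m is contained in the Jacobson radical of ⊥
    have hjac : m ≤ Ideal.jacobson ⊥ := by
      refine le_sInf ?_
      rintro J ⟨-, hJ⟩
      rcases h m J with h1 | h2
      · exact h1
      · exact (hJ.eq_of_le hm.ne_top h2).ge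
    obtain ⟨k, hk⟩ := IsArtinianRing.isNilpotent_jacobson_bot (R := R)
    have hnil : IsNilpotent π := by
      refine ⟨k, ?_⟩
      have h1 : π ^ k ∈ m ^ k := Ideal.pow_mem_pow hπm k
      have h2 : m ^ k ≤ (Ideal.jacobson (⊥ : Ideal R)) ^ k := Ideal.pow_right_mono hjac k
      rw [hk] at h2
      exact Ideal.mem_bot.mp (h2 h1)
    refine ⟨π, hnil, ?_⟩
    rw [heq] at *
    exact (Ideal.Quotient.maximal_ideal_iff_isField_quotient m).mp hm
  · rintro ⟨π, ⟨n, hn⟩, hfield⟩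
    have hmax : (Ideal.span {π}).IsMaximal :=
      (Ideal.Quotient.maximal_ideal_iff_isField_quotient _).mpr hfield
    set m := Ideal.span {π} with hm_def
    have huniq : ∀ J : Ideal R, J.IsMaximal → J = m := by
      intro J hJ
      have hπJ : π ∈ J := hJ.isPrime.mem_of_pow_mem n (by rw [hn]; exact J.zero_mem)
      exact (hmax.eq_of_le hJ.ne_top
        (Ideal.span_le.mpr (Set.singleton_subset_iff.mpr hπJ))).symm
    have hproper : ∀ I : Ideal R, I ≠ ⊤ → I ≤ m := by
      intro I hI
      obtain ⟨J, hJ, hle⟩ := I.exists_le_maximal hI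
      rw [← huniq J hJ]
      exact hle
    have hmn : m ^ n = ⊥ := by
      rw [hm_def, Ideal.span_singleton_pow, hn, Ideal.span_singleton_eq_bot]
    -- every ideal is a power of m
    have key : ∀ I : Ideal R, ∃ k, I = m ^ k := by
      intro I
      by_cases htop : I = ⊤
      · exact ⟨0, by rw [htop, pow_zero, Ideal.one_eq_top]⟩
      by_cases hbot : I = ⊥
      · exact ⟨n, by rw [hbot, hmn]⟩
      have hex : ∃ k, ¬ I ≤ m ^ k :=
        ⟨n, by rw [hmn]; exact fun hle => hbot (le_bot_iff.mp hle)⟩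
      classical
      set k := Nat.find hex with hk_def
      have hk : ¬ I ≤ m ^ k := Nat.find_spec hex
      have hk0 : k ≠ 0 := by
        intro h0
        apply hk
        rw [h0, pow_zero, Ideal.one_eq_top]
        exact le_top
      have hk1 : I ≤ m ^ (k - 1) := by
        by_contra hc
        exact Nat.find_min hex (Nat.pred_lt hk0) hc
      obtain ⟨x, hxI, hxk⟩ := SetLike.not_le_iff_exists.mp hk
      have hx1 : x ∈ m ^ (k - 1) := hk1 hxI
      rw [hm_def, Ideal.span_singleton_pow] at hx1
      obtain ⟨a, ha⟩ := Ideal.mem_span_singleton'.mp hx1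
      have hksucc : k - 1 + 1 = k := Nat.succ_pred_eq_of_ne_zero hk0
      have haU : IsUnit a := by
        by_contra hna
        have haM : a ∈ m := hproper _ (fun ht => hna (Ideal.span_singleton_eq_top.mp ht))
          (Ideal.mem_span_singleton_self a)
        rw [hm_def, Ideal.mem_span_singleton'] at haM
        obtain ⟨b, hb⟩ := haM
        apply hxk
        rw [hm_def, Ideal.span_singleton_pow, Ideal.mem_span_singleton']
        refine ⟨b, ?_⟩
        calc b * π ^ k = b * π ^ (k - 1 + 1) := by rw [hksucc]
          _ = (b * π) * π ^ (k - 1) := by rw [pow_succ]; ring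
          _ = a * π ^ (k - 1) := by rw [hb]
          _ = x := ha
      obtain ⟨u, hu⟩ := haU
      have hπk : π ^ (k - 1) ∈ I := by
        have heq2 : π ^ (k - 1) = ↑u⁻¹ * x := by
          rw [← ha, ← hu, ← mul_assoc, Units.inv_mul, one_mul]
        rw [heq2]
        exact I.mul_mem_left _ hxI
      refine ⟨k - 1, le_antisymm hk1 ?_⟩
      rw [hm_def, Ideal.span_singleton_pow, Ideal.span_le, Set.singleton_subset_iff]
      exact hπk
    intro I J
    obtain ⟨i, rfl⟩ := key I
    obtain ⟨j, rfl⟩ := key J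
    rcases le_total i j with hij | hij
    · exact Or.inr (Ideal.pow_le_pow_right hij)
    · exact Or.inl (Ideal.pow_le_pow_right hij)
end
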